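/- Let l be a field containing a primitive m-th root of unity and ρ a cyclic group of order m. The Fourier transform of the primitive idempotent e_prim ∈ l[ρ] is the indicator function of the injective characters: F(e_prim)(χ) = 1 if χ : ρ → lˣ is injective, and F(e_prim)(χ) = 0 otherwise. Consequently, F maps the primitive part e_prim·l[ρ] bijectively onto the set of functions ρ^∨ → l that vanish on every non-injective character. -/

import Mathlib

open MonoidAlgebra

/-- The averaging element `e_{ρ'} = (1/|ρ'|)·∑_{h ∈ ρ'} h` of the group algebra `l[ρ]`
associated to a subgroup `ρ'` of the finite group `ρ`. -/
noncomputable def avgIdem (S : Type*) [CommRing S] {ρ : Type*} [CommGroup ρ] [Fintype ρ]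
    (ρ' : Subgroup ρ) : MonoidAlgebra S ρ :=
  haveI : Fintype ρ' := Fintype.ofFinite ρ'
  Ring.inverse ((Nat.card ρ' : S)) • ∑ h : ρ', MonoidAlgebra.of S ρ (h : ρ)

/-- The primitive idempotent `e_prim = ∏_{p ∣ m prime} (1 − e_{ρ_p})` of the group algebra
`l[ρ]` of a cyclic group `ρ` of order `m` with chosen generator `t`; here `ρ_p` is the
unique subgroup of prime order `p`, namely the one generated by `t^(m/p)`. -/
noncomputable def primIdem (S : Type*) [CommRing S] {ρ : Type*} [CommGroup ρ] [Fintype ρ]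
    (m : ℕ) (t : ρ) : MonoidAlgebra S ρ :=
  ∏ p ∈ m.primeFactors, (1 - avgIdem S (Subgroup.zpowers (t ^ (m / p))))

/-- The Fourier transform `F : l[ρ] → (ρ^∨ → l)`, sending `a = ∑_g a_g·g` to the function
`χ ↦ ∑_g a_g·χ(g)`. -/
noncomputable def charFourier (l : Type*) [Field l] (ρ : Type*) [CommGroup ρ] [Fintype ρ]
    (a : MonoidAlgebra l ρ) : (ρ →* lˣ) → l :=
  fun χ => ∑ g : ρ, a.coeff g * (χ g : l)

section Aux

variable {l : Type*} [Field l] {ρ : Type*} [CommGroup ρ] [Fintype ρ] {m : ℕ} {t : ρ}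

lemma charFourier_eq_lift (a : MonoidAlgebra l ρ) (χ : ρ →* lˣ) :
    charFourier l ρ a χ = MonoidAlgebra.lift l l ρ ((Units.coeHom l).comp χ) a := by
  rw [MonoidAlgebra.lift_apply, charFourier, Finsupp.sum]
  rw [← Finset.sum_subset (Finset.subset_univ a.coeff.support)]
  · exact Finset.sum_congr rfl fun g _ => (smul_eq_mul _ _).symm
  · intro g _ hg
    rw [Finsupp.notMem_support_iff.mp hg, zero_mul]

lemma charFourier_mul (a b : MonoidAlgebra l ρ) (χ : ρ →* lˣ) :
    charFourier l ρ (a * b) χ = charFourier l ρ a χ * charFourier l ρ b χ := by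
  simp only [charFourier_eq_lift, map_mul]

lemma charFourier_of (g : ρ) (χ : ρ →* lˣ) :
    charFourier l ρ (MonoidAlgebra.of l ρ g) χ = χ g := by
  simp [charFourier_eq_lift, MonoidAlgebra.lift_of]

lemma charFourier_one (χ : ρ →* lˣ) : charFourier l ρ 1 χ = 1 := by
  simp [charFourier_eq_lift]

lemma charFourier_sub (a b : MonoidAlgebra l ρ) (χ : ρ →* lˣ) :
    charFourier l ρ (a - b) χ = charFourier l ρ a χ - charFourier l ρ b χ := by
  simp only [charFourier_eq_lift, map_sub]

lemma charFourier_smul (c : l) (a : MonoidAlgebra l ρ) (χ : ρ →* lˣ) :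
    charFourier l ρ (c • a) χ = c * charFourier l ρ a χ := by
  simp only [charFourier_eq_lift, map_smul, smul_eq_mul]

lemma charFourier_sum {ι : Type*} (s : Finset ι) (F : ι → MonoidAlgebra l ρ) (χ : ρ →* lˣ) :
    charFourier l ρ (∑ i ∈ s, F i) χ = ∑ i ∈ s, charFourier l ρ (F i) χ := by
  simp only [charFourier_eq_lift, map_sum]

lemma charFourier_prod {ι : Type*} (s : Finset ι) (F : ι → MonoidAlgebra l ρ) (χ : ρ →* lˣ) :
    charFourier l ρ (∏ i ∈ s, F i) χ = ∏ i ∈ s, charFourier l ρ (F i) χ := by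
  simp only [charFourier_eq_lift, map_prod]

lemma charFourier_avgIdem (ρ' : Subgroup ρ) [inst : Fintype ρ'] (χ : ρ →* lˣ) :
    charFourier l ρ (avgIdem l ρ') χ
      = Ring.inverse (Nat.card ρ' : l) * ∑ h : ρ', ((χ h : lˣ) : l) := by
  rw [avgIdem, Subsingleton.elim (Fintype.ofFinite ρ') inst, charFourier_smul, charFourier_sum]
  simp only [charFourier_of]

lemma charFourier_avgIdem_of_trivial (ρ' : Subgroup ρ) (hc : (Nat.card ρ' : l) ≠ 0)
    (χ : ρ →* lˣ) (H : ∀ h ∈ ρ', χ h = 1) :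
    charFourier l ρ (avgIdem l ρ') χ = 1 := by
  haveI : Fintype ρ' := Fintype.ofFinite ρ'
  rw [charFourier_avgIdem, Ring.inverse_eq_inv']
  have h1 : ∀ h : ρ', ((χ h : lˣ) : l) = 1 := fun h => by rw [H h h.2, Units.val_one]
  rw [Finset.sum_congr rfl fun h _ => h1 h, Finset.sum_const, Finset.card_univ,
    nsmul_eq_mul, mul_one, Nat.card_eq_fintype_card, inv_mul_cancel₀]
  rwa [Nat.card_eq_fintype_card] at hc

lemma charFourier_avgIdem_of_nontrivial (ρ' : Subgroup ρ)
    (χ : ρ →* lˣ) (H : ¬ ∀ h ∈ ρ', χ h = 1) :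
    charFourier l ρ (avgIdem l ρ') χ = 0 := by
  haveI : Fintype ρ' := Fintype.ofFinite ρ'
  rw [charFourier_avgIdem]
  push_neg at H
  obtain ⟨h, hmem, hne⟩ := H
  have hz : (∑ x : ρ', ((χ x : lˣ) : l)) = 0 := by
    have := sum_hom_units_eq_zero ((Units.coeHom l).comp (χ.comp ρ'.subtype)) ?_
    · simpa using this
    · intro hcon
      apply hne
      have := DFunLike.congr_fun hcon ⟨h, hmem⟩
      simp only [MonoidHom.coe_comp, Function.comp_apply, MonoidHom.coe_coe,
        Units.coeHom_apply, MonoidHom.one_apply, Subgroup.coe_subtype] at this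
      exact Units.ext this
  rw [hz, mul_zero]

lemma orderOf_gen' (hcard : Fintype.card ρ = m) (ht : ∀ g : ρ, g ∈ Subgroup.zpowers t) :
    orderOf t = m := by
  rw [orderOf_eq_card_of_forall_mem_zpowers ht, Nat.card_eq_fintype_card, hcard]

lemma orderOf_pow_div (hm : 0 < m) (hcard : Fintype.card ρ = m)
    (ht : ∀ g : ρ, g ∈ Subgroup.zpowers t) {p : ℕ} (hp : p ∈ m.primeFactors) :
    orderOf (t ^ (m / p)) = p := by
  have hpm : p ∣ m := Nat.dvd_of_mem_primeFactors hp
  rw [orderOf_pow, orderOf_gen' hcard ht, Nat.gcd_eq_right (Nat.div_dvd_of_dvd hpm),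
    Nat.div_div_self hpm hm.ne']

lemma card_rhop (hm : 0 < m) (hcard : Fintype.card ρ = m)
    (ht : ∀ g : ρ, g ∈ Subgroup.zpowers t) {p : ℕ} (hp : p ∈ m.primeFactors) :
    Nat.card (Subgroup.zpowers (t ^ (m / p))) = p := by
  rw [Nat.card_zpowers, orderOf_pow_div hm hcard ht hp]

lemma inj_char_nontrivial (hm : 0 < m) (hcard : Fintype.card ρ = m)
    (ht : ∀ g : ρ, g ∈ Subgroup.zpowers t) {p : ℕ} (hp : p ∈ m.primeFactors)
    {χ : ρ →* lˣ} (hχ : Function.Injective χ) :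
    ¬ ∀ h ∈ Subgroup.zpowers (t ^ (m / p)), χ h = 1 := by
  intro H
  have h1 : t ^ (m / p) ≠ 1 := by
    intro h
    have h2 := orderOf_pow_div hm hcard ht hp
    rw [h, orderOf_one] at h2
    exact (Nat.prime_of_mem_primeFactors hp).one_lt.ne h2
  exact h1 (hχ (by rw [H _ (Subgroup.mem_zpowers _), map_one]))

lemma noninj_char_trivial (hm : 0 < m) (hcard : Fintype.card ρ = m)
    (ht : ∀ g : ρ, g ∈ Subgroup.zpowers t)
    {χ : ρ →* lˣ} (hχ : ¬ Function.Injective χ) :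
    ∃ p ∈ m.primeFactors, ∀ h ∈ Subgroup.zpowers (t ^ (m / p)), χ h = 1 := by
  have hex : ∃ g : ρ, g ≠ 1 ∧ χ g = 1 := by
    rw [injective_iff_map_eq_one] at hχ
    push_neg at hχ
    obtain ⟨g, hg1, hg2⟩ := hχ
    exact ⟨g, hg2, hg1⟩
  obtain ⟨g, hg1, hgχ⟩ := hex
  set d := orderOf g with hd
  have hd1 : d ≠ 1 := fun h => hg1 (orderOf_eq_one_iff.mp h)
  have hdm : d ∣ m := hcard ▸ orderOf_dvd_card
  set p := d.minFac with hpdef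
  have hp : p.Prime := Nat.minFac_prime hd1
  have hpd : p ∣ d := Nat.minFac_dvd d
  have hpm : p ∣ m := hpd.trans hdm
  refine ⟨p, Nat.mem_primeFactors.mpr ⟨hp, hpm, hm.ne'⟩, ?_⟩
  set x := g ^ (d / p) with hx
  have horderx : orderOf x = p := by
    rw [hx, orderOf_pow, ← hd, Nat.gcd_eq_right (Nat.div_dvd_of_dvd hpd),
      Nat.div_div_self hpd (orderOf_pos g).ne']
  have hχx : χ x = 1 := by rw [hx, map_pow, hgχ, one_pow]
  have hx1 : x ≠ 1 := fun h => hp.one_lt.ne' (by rw [← horderx, h, orderOf_one])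
  obtain ⟨z, hz⟩ := Subgroup.mem_zpowers_iff.mp (ht x)
  have hxp : x ^ (p : ℤ) = 1 := by
    rw [zpow_natCast, ← horderx, pow_orderOf_eq_one]
  have hdvd : ((m : ℤ)) ∣ z * p := by
    rw [← orderOf_gen' hcard ht]
    exact orderOf_dvd_iff_zpow_eq_one.mpr (by rw [zpow_mul, hz, hxp])
  have hmp : (m : ℤ) = (m / p : ℕ) * (p : ℕ) := by
    norm_cast
    exact (Nat.div_mul_cancel hpm).symm
  have hdvd2 : ((m / p : ℕ) : ℤ) ∣ z := by
    have h3 := hdvd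
    rw [hmp] at h3
    exact (mul_dvd_mul_iff_right (by exact_mod_cast hp.ne_zero : ((p:ℕ):ℤ) ≠ 0)).mp h3
  obtain ⟨v, hv⟩ := hdvd2
  have hxv : (t ^ (m / p)) ^ v = x := by
    rw [← hz, hv, ← zpow_natCast t (m/p), ← zpow_mul]
  have hpv : ¬ ((p : ℤ) ∣ v) := by
    rintro ⟨u, rfl⟩
    apply hx1
    rw [← hxv, zpow_mul, zpow_natCast, ← pow_mul, Nat.div_mul_cancel hpm, ← zpow_natCast,
      ← zpow_mul]
    · rw [← orderOf_gen' hcard ht] at *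
      rw [zpow_mul, zpow_natCast, pow_orderOf_eq_one, one_zpow]
  have hcop : IsCoprime (p : ℤ) v :=
    (Nat.prime_iff_prime_int.mp hp).coprime_iff_not_dvd.mpr hpv
  obtain ⟨a, b, hab⟩ := hcop
  have htm : (t ^ (m / p)) ^ (p : ℤ) = 1 := by
    rw [zpow_natCast, ← pow_mul, Nat.div_mul_cancel hpm, ← orderOf_gen' hcard ht,
      pow_orderOf_eq_one]
  have hkey : χ (t ^ (m / p)) = 1 := by
    have hab' : (p:ℤ) * a + v * b = 1 := by linarith
    have h4 : t ^ (m / p) = x ^ b := by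
      calc t ^ (m / p) = (t ^ (m / p)) ^ ((p:ℤ) * a + v * b) := by rw [hab', zpow_one]
      _ = ((t ^ (m / p)) ^ (p:ℤ)) ^ a * ((t ^ (m / p)) ^ v) ^ b := by
          rw [zpow_add, zpow_mul, zpow_mul]
      _ = x ^ b := by rw [htm, one_zpow, one_mul, hxv]
    rw [h4, map_zpow, hχx, one_zpow]
  intro h hh
  obtain ⟨k, hk⟩ := Subgroup.mem_zpowers_iff.mp hh
  rw [← hk, map_zpow, hkey, one_zpow]

lemma exists_inj_char (hm : 0 < m) (hcard : Fintype.card ρ = m) {ζ : l}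
    (hζ : IsPrimitiveRoot ζ m) (ht : ∀ g : ρ, g ∈ Subgroup.zpowers t) :
    ∃ χ₀ : ρ →* lˣ, Function.Injective χ₀ := by
  have hu : IsPrimitiveRoot (hζ.isUnit hm.ne').unit m := hζ.isUnit_unit hm.ne'
  have hou : orderOf (hζ.isUnit hm.ne').unit = m := hu.eq_orderOf.symm
  have hot : orderOf t = m := orderOf_gen' hcard ht
  have hdvd : orderOf (hζ.isUnit hm.ne').unit ∣ orderOf t := by rw [hou, hot]
  refine ⟨monoidHomOfForallMemZpowers ht hdvd, ?_⟩
  set χ₀ := monoidHomOfForallMemZpowers ht hdvd with hχ₀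
  rw [injective_iff_map_eq_one]
  intro g hg
  obtain ⟨z, hz⟩ := Subgroup.mem_zpowers_iff.mp (ht g)
  have h5 : χ₀ (t ^ z) = (hζ.isUnit hm.ne').unit ^ z := by
    rw [map_zpow, monoidHomOfForallMemZpowers_apply_gen]
  rw [← hz, h5] at hg
  have hdz : ((m : ℤ)) ∣ z := by
    rw [← hou]
    exact orderOf_dvd_iff_zpow_eq_one.mpr hg
  obtain ⟨w, rfl⟩ := hdz
  rw [← hz, zpow_mul, ← hot, zpow_natCast, pow_orderOf_eq_one, one_zpow]

lemma sum_char_over_group (η : ρ →* lˣ) (hη : η ≠ 1) :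
    ∑ g : ρ, ((η g : lˣ) : l) = 0 := by
  refine sum_hom_units_eq_zero ((Units.coeHom l).comp η) fun hcon =>
    hη (MonoidHom.ext fun g => ?_)
  have := DFunLike.congr_fun hcon g
  simp only [MonoidHom.coe_comp, Function.comp_apply, Units.coeHom_apply,
    MonoidHom.one_apply] at this
  simp only [MonoidHom.one_apply]
  exact Units.val_eq_one.mp this

lemma sum_eval_over_chars [Fintype (ρ →* lˣ)]
    (hsep : ∃ χ₀ : ρ →* lˣ, Function.Injective χ₀) {g : ρ} (hg : g ≠ 1) :
    ∑ χ : ρ →* lˣ, ((χ g : lˣ) : l) = 0 := by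
  obtain ⟨χ₀, hχ₀⟩ := hsep
  let ev : (ρ →* lˣ) →* lˣ :=
    { toFun := fun χ => χ g, map_one' := rfl, map_mul' := fun _ _ => rfl }
  refine sum_hom_units_eq_zero ((Units.coeHom l).comp ev) fun hcon => ?_
  have := DFunLike.congr_fun hcon χ₀
  simp only [MonoidHom.coe_comp, Function.comp_apply, Units.coeHom_apply,
    MonoidHom.one_apply, ev, MonoidHom.coe_mk, OneHom.coe_mk] at this
  exact hg (hχ₀ (by rw [map_one]; exact Units.val_eq_one.mp this))

lemma charFourier_eq_zero_iff [Fintype (ρ →* lˣ)]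
    (hC : Nat.card (ρ →* lˣ) = m) (hml : (m : l) ≠ 0)
    (hsep : ∃ χ₀ : ρ →* lˣ, Function.Injective χ₀)
    {a : MonoidAlgebra l ρ} (ha : ∀ χ : ρ →* lˣ, charFourier l ρ a χ = 0) : a = 0 := by
  classical
  ext g
  have h1 : ∀ h : ρ, (∑ χ : ρ →* lˣ, ((χ (h * g⁻¹) : lˣ) : l)) = if h = g then (m : l) else 0 := by
    intro h
    by_cases hh : h = g
    · subst hh
      rw [if_pos rfl]
      simp only [mul_inv_cancel, map_one, Units.val_one]
      rw [Finset.sum_const, Finset.card_univ, ← Nat.card_eq_fintype_card, hC, nsmul_eq_mul,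
        mul_one]
    · rw [if_neg hh]
      exact sum_eval_over_chars hsep (by simpa [mul_inv_eq_one] using hh)
  have h2 : ∑ χ : ρ →* lˣ, charFourier l ρ a χ * ((χ g⁻¹ : lˣ) : l) = a.coeff g * m := by
    calc ∑ χ : ρ →* lˣ, charFourier l ρ a χ * ((χ g⁻¹ : lˣ) : l)
        = ∑ χ : ρ →* lˣ, ∑ h : ρ, a.coeff h * ((χ (h * g⁻¹) : lˣ) : l) := by
          refine Finset.sum_congr rfl fun χ _ => ?_
          rw [charFourier, Finset.sum_mul]
          refine Finset.sum_congr rfl fun h _ => ?_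
          rw [map_mul, Units.val_mul, mul_assoc]
      _ = ∑ h : ρ, ∑ χ : ρ →* lˣ, a.coeff h * ((χ (h * g⁻¹) : lˣ) : l) := Finset.sum_comm
      _ = ∑ h : ρ, a.coeff h * ∑ χ : ρ →* lˣ, ((χ (h * g⁻¹) : lˣ) : l) := by
          simp [Finset.mul_sum]
      _ = ∑ h : ρ, a.coeff h * (if h = g then (m : l) else 0) := by
          exact Finset.sum_congr rfl fun h _ => by rw [h1 h]
      _ = a.coeff g * (m : l) := by
          simp only [mul_ite, mul_zero]
          rw [Finset.sum_ite_eq' Finset.univ g fun h => a.coeff h * (m : l)]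
          simp
  have h0 : ∑ χ : ρ →* lˣ, charFourier l ρ a χ * ((χ g⁻¹ : lˣ) : l) = 0 := by simp [ha]
  rw [h0] at h2
  have := (mul_eq_zero.mp h2.symm).resolve_right hml
  simpa using this

lemma charFourier_inv_formula [Fintype (ρ →* lˣ)]
    (hcard : Fintype.card ρ = m) (hml : (m : l) ≠ 0)
    (f : (ρ →* lˣ) → l) (ψ : ρ →* lˣ) :
    charFourier l ρ (∑ g : ρ, ((m : l)⁻¹ * ∑ χ : ρ →* lˣ, f χ * ((χ g⁻¹ : lˣ) : l)) •
      MonoidAlgebra.of l ρ g) ψ = f ψ := by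
  classical
  rw [charFourier_sum]
  simp only [charFourier_smul, charFourier_of]
  have key : ∀ χ : ρ →* lˣ, (∑ g : ρ, ((χ g⁻¹ : lˣ) : l) * ((ψ g : lˣ) : l))
      = if χ = ψ then (m : l) else 0 := by
    intro χ
    have hterm : ∀ g : ρ, ((χ g⁻¹ : lˣ) : l) * ((ψ g : lˣ) : l) = (((ψ * χ⁻¹) g : lˣ) : l) := by
      intro g
      simp only [MonoidHom.mul_apply, MonoidHom.inv_apply, Units.val_mul, map_inv]
      rw [mul_comm]
    rw [Finset.sum_congr rfl fun g _ => hterm g]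
    by_cases hχ : χ = ψ
    · subst hχ
      rw [if_pos rfl]
      have h1 : ∀ g : ρ, (((χ * χ⁻¹) g : lˣ) : l) = 1 := fun g => by
        simp [MonoidHom.mul_apply, MonoidHom.inv_apply]
      rw [Finset.sum_congr rfl fun g _ => h1 g, Finset.sum_const, Finset.card_univ, hcard,
        nsmul_eq_mul, mul_one]
    · rw [if_neg hχ]
      refine sum_char_over_group _ fun hcon => hχ ?_
      ext g
      have := DFunLike.congr_fun hcon g
      simp only [MonoidHom.mul_apply, MonoidHom.inv_apply, MonoidHom.one_apply] at this
      rw [mul_inv_eq_one] at this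
      rw [this]
  calc ∑ g : ρ, ((m : l)⁻¹ * ∑ χ : ρ →* lˣ, f χ * ((χ g⁻¹ : lˣ) : l)) * ((ψ g : lˣ) : l)
      = (m : l)⁻¹ * ∑ g : ρ, ∑ χ : ρ →* lˣ, f χ * (((χ g⁻¹ : lˣ) : l) * ((ψ g : lˣ) : l)) := by
        rw [Finset.mul_sum]
        refine Finset.sum_congr rfl fun g _ => ?_
        rw [mul_assoc, Finset.sum_mul]
        congr 1
        exact Finset.sum_congr rfl fun χ _ => by rw [mul_assoc]
    _ = (m : l)⁻¹ * ∑ χ : ρ →* lˣ, f χ * ∑ g : ρ, (((χ g⁻¹ : lˣ) : l) * ((ψ g : lˣ) : l)) := by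
        rw [Finset.sum_comm]
        simp [Finset.mul_sum]
    _ = (m : l)⁻¹ * ∑ χ : ρ →* lˣ, f χ * (if χ = ψ then (m : l) else 0) := by
        congr 1
        exact Finset.sum_congr rfl fun χ _ => by rw [key χ]
    _ = f ψ := by
        simp only [mul_ite, mul_zero]
        rw [Finset.sum_ite_eq' Finset.univ ψ fun χ => f χ * (m : l)]
        simp only [Finset.mem_univ, if_true]
        field_simp

lemma char_card (hm : 0 < m) (hcard : Fintype.card ρ = m) {ζ : l}
    (hζ : IsPrimitiveRoot ζ m) (ht : ∀ g : ρ, g ∈ Subgroup.zpowers t) :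
    Nat.card (ρ →* lˣ) = m := by
  haveI : NeZero m := ⟨hm.ne'⟩
  have e1 := IsCyclic.monoidHomMulEquivRootsOfUnityOfGenerator ht lˣ
  have e2 := rootsOfUnityUnitsMulEquiv l (Nat.card ρ)
  have hnc : Nat.card ρ = m := by rw [Nat.card_eq_fintype_card, hcard]
  rw [Nat.card_congr e1.toEquiv, Nat.card_congr e2.toEquiv, hnc,
    hζ.card_rootsOfUnity]

lemma char_finite (ht : ∀ g : ρ, g ∈ Subgroup.zpowers t) : Finite (ρ →* lˣ) := by
  haveI : NeZero (Nat.card ρ) := ⟨Nat.card_pos.ne'⟩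
  have e1 := IsCyclic.monoidHomMulEquivRootsOfUnityOfGenerator ht lˣ
  have e2 := rootsOfUnityUnitsMulEquiv l (Nat.card ρ)
  exact Finite.of_equiv _ ((e1.trans e2).toEquiv).symm

lemma charFourier_primIdem_inj (hm : 0 < m) (hcard : Fintype.card ρ = m)
    (hml : (m : l) ≠ 0) (ht : ∀ g : ρ, g ∈ Subgroup.zpowers t)
    {χ : ρ →* lˣ} (hχ : Function.Injective χ) :
    charFourier l ρ (primIdem l m t) χ = 1 := by
  rw [primIdem, charFourier_prod]
  refine Finset.prod_eq_one fun p hp => ?_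
  rw [charFourier_sub, charFourier_one,
    charFourier_avgIdem_of_nontrivial _ _ (inj_char_nontrivial hm hcard ht hp hχ), sub_zero]

lemma charFourier_primIdem_noninj (hm : 0 < m) (hcard : Fintype.card ρ = m)
    (hml : (m : l) ≠ 0) (ht : ∀ g : ρ, g ∈ Subgroup.zpowers t)
    {χ : ρ →* lˣ} (hχ : ¬ Function.Injective χ) :
    charFourier l ρ (primIdem l m t) χ = 0 := by
  obtain ⟨p, hp, htriv⟩ := noninj_char_trivial hm hcard ht hχ
  rw [primIdem, charFourier_prod]
  refine Finset.prod_eq_zero hp ?_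
  have hcnz : ((Nat.card (Subgroup.zpowers (t ^ (m / p)))) : l) ≠ 0 := by
    rw [card_rhop hm hcard ht hp]
    intro h0
    apply hml
    obtain ⟨j, rfl⟩ := Nat.dvd_of_mem_primeFactors hp
    push_cast
    rw [h0, zero_mul]
  rw [charFourier_sub, charFourier_one,
    charFourier_avgIdem_of_trivial _ hcnz χ htriv, sub_self]

end Aux

/-- The Fourier transform of the primitive idempotent `e_prim ∈ l[ρ]` is the indicator
function of the injective characters; consequently `F` maps the primitive part
`e_prim·l[ρ]` bijectively onto the set of functions `ρ^∨ → l` vanishing on every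
non-injective character. -/
theorem fourier_primIdem_eq_indicator_of_injective_characters
    (l : Type*) [Field l] (ρ : Type*) [CommGroup ρ] [Fintype ρ]
    (m : ℕ) (hm : 0 < m) (hcard : Fintype.card ρ = m)
    (hζ : ∃ ζ : l, IsPrimitiveRoot ζ m)
    (t : ρ) (ht : ∀ g : ρ, g ∈ Subgroup.zpowers t) :
    (∀ χ : ρ →* lˣ,
      (Function.Injective χ → charFourier l ρ (primIdem l m t) χ = 1) ∧
      (¬ Function.Injective χ → charFourier l ρ (primIdem l m t) χ = 0)) ∧
    Set.BijOn (charFourier l ρ)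
      {x : MonoidAlgebra l ρ | primIdem l m t * x = x}
      {f : (ρ →* lˣ) → l | ∀ χ : ρ →* lˣ, ¬ Function.Injective χ → f χ = 0} := by
  obtain ⟨ζ, hζ⟩ := hζ
  haveI : NeZero m := ⟨hm.ne'⟩
  have hml : (m : l) ≠ 0 := hζ.neZero'.out
  haveI : Finite (ρ →* lˣ) := char_finite ht
  haveI : Fintype (ρ →* lˣ) := Fintype.ofFinite _
  have hC : Nat.card (ρ →* lˣ) = m := char_card hm hcard hζ ht
  have hsep : ∃ χ₀ : ρ →* lˣ, Function.Injective χ₀ := exists_inj_char hm hcard hζ ht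
  have hinj1 : ∀ {χ : ρ →* lˣ}, Function.Injective χ →
      charFourier l ρ (primIdem l m t) χ = 1 := fun h =>
    charFourier_primIdem_inj hm hcard hml ht h
  have hinj0 : ∀ {χ : ρ →* lˣ}, ¬ Function.Injective χ →
      charFourier l ρ (primIdem l m t) χ = 0 := fun h =>
    charFourier_primIdem_noninj hm hcard hml ht h
  have hFinj : ∀ x y : MonoidAlgebra l ρ,
      charFourier l ρ x = charFourier l ρ y → x = y := by
    intro x y hxy
    have h := charFourier_eq_zero_iff hC hml hsep (a := x - y) fun χ => by
      rw [charFourier_sub, congr_fun hxy χ, sub_self]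
    exact sub_eq_zero.mp h
  have hidem : primIdem l m t * primIdem l m t = primIdem l m t := by
    apply hFinj
    funext χ
    rw [charFourier_mul]
    by_cases hχ : Function.Injective χ
    · rw [hinj1 hχ, one_mul]
    · rw [hinj0 hχ, zero_mul]
  refine ⟨fun χ => ⟨fun h => hinj1 h, fun h => hinj0 h⟩, ?_, ?_, ?_⟩
  · -- MapsTo
    intro x hx
    have hx' : primIdem l m t * x = x := hx
    intro χ hχ
    have h := charFourier_mul (primIdem l m t) x χ
    rw [hx'] at h
    rw [h, hinj0 hχ, zero_mul]
  · -- InjOn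
    intro x _ y _ hxy
    exact hFinj x y hxy
  · -- SurjOn
    intro f hf
    rw [Set.mem_setOf_eq] at hf
    set x₀ : MonoidAlgebra l ρ :=
      ∑ g : ρ, ((m : l)⁻¹ * ∑ χ : ρ →* lˣ, f χ * ((χ g⁻¹ : lˣ) : l)) •
        MonoidAlgebra.of l ρ g with hx₀def
    have hx₀ : ∀ ψ : ρ →* lˣ, charFourier l ρ x₀ ψ = f ψ := fun ψ =>
      charFourier_inv_formula hcard hml f ψ
    refine ⟨primIdem l m t * x₀, ?_, ?_⟩
    · show primIdem l m t * (primIdem l m t * x₀) = primIdem l m t * x₀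
      rw [← mul_assoc, hidem]
    · funext ψ
      rw [charFourier_mul]
      by_cases hψ : Function.Injective ψ
      · rw [hinj1 hψ, one_mul, hx₀]
      · rw [hinj0 hψ, zero_mul, (hf ψ hψ).symm]
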